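/- Let L be a first-order language, M an L-structure, and C a subset of M. Let ⫝ be a ternary relation on subsets of M (finite tuples being identified with the sets of their coordinates) satisfying: (Symmetry) if A ⫝_C B then B ⫝_C A; (Monotonicity) if A ⫝_C B ∪ D then A ⫝_C B; (Existence) B ⫝_C C for every B; and (Strong Finite Character over C) for all finite tuples a, b from M, if ¬(a ⫝_C b) then there exist an L-formula φ(x, y, z) and a finite tuple e from C such that M ⊨ φ(a, b, e) and every tuple a' from M with M ⊨ φ(a', b, e) satisfies ¬(a' ⫝_C b). Let a, b be finite tuples from M such that the type of a over C ∪ b is finitely satisfiable in C, i.e. for every L-formula ψ(x, y, z) and every finite tuple c from C with M ⊨ ψ(a, b, c), there is a tuple a'' from C with M ⊨ ψ(a'', b, c). Then a ⫝_C b. -/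
import Mathlib


open FirstOrder

/-- Let `⫝` be a ternary relation on subsets of an `L`-structure `M` satisfying
Symmetry, Monotonicity, Existence and Strong Finite Character over a set `C`
(finite tuples being identified with the sets of their coordinates). If the type of
a tuple `a` over `C ∪ b` is finitely satisfiable in `C`, then `a ⫝_C b`. -/
theorem finitely_satisfiable_implies_ind {L : Language} {M : Type*} [L.Structure M]
    (C : Set M) (ind : Set M → Set M → Set M → Prop)
    -- Symmetry
    (hsym : ∀ A B : Set M, ind A C B → ind B C A)
    -- Monotonicity
    (hmono : ∀ A B D : Set M, ind A C (B ∪ D) → ind A C B)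
    -- Existence
    (hex : ∀ B : Set M, ind B C C)
    -- Strong Finite Character over C
    (hsfc : ∀ (n m : ℕ) (a : Fin n → M) (b : Fin m → M),
      ¬ ind (Set.range a) C (Set.range b) →
      ∃ (k : ℕ) (φ : L.Formula ((Fin n ⊕ Fin m) ⊕ Fin k)) (e : Fin k → M),
        (∀ i, e i ∈ C) ∧ φ.Realize (Sum.elim (Sum.elim a b) e) ∧
        ∀ a' : Fin n → M, φ.Realize (Sum.elim (Sum.elim a' b) e) →
          ¬ ind (Set.range a') C (Set.range b))
    {n m : ℕ} (a : Fin n → M) (b : Fin m → M)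
    -- the type of `a` over `C ∪ b` is finitely satisfiable in `C`
    (hfs : ∀ (k : ℕ) (ψ : L.Formula ((Fin n ⊕ Fin m) ⊕ Fin k)) (c : Fin k → M),
      (∀ i, c i ∈ C) → ψ.Realize (Sum.elim (Sum.elim a b) c) →
      ∃ a'' : Fin n → M, (∀ i, a'' i ∈ C) ∧ ψ.Realize (Sum.elim (Sum.elim a'' b) c)) :
    ind (Set.range a) C (Set.range b) := by
  by_contra h
  obtain ⟨k, φ, e, heC, hreal, hbad⟩ := hsfc n m a b h
  obtain ⟨a'', ha''C, hreal''⟩ := hfs k φ e heC hreal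
  apply hbad a'' hreal''
  apply hsym
  have hsub : Set.range a'' ∪ C = C := by
    apply Set.union_eq_self_of_subset_left
    rintro x ⟨i, rfl⟩; exact ha''C i
  exact hmono _ _ C (by rw [hsub]; exact hex _)
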